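/- Suppose α = (m/n)π with m, n positive integers and gcd(m,n) = 1. Let I_j = ((2j−1)π/(2n) − π/(4n), (2j−1)π/(2n) + π/(4n)) for j = 1, …, n, and let W = ∪_{j=1}^n I_j. Then W is invariant under the Feres random map: for every θ ∈ W and every k ∈ {1,2,3,4} with p_k(θ) > 0, one has T_k(θ) ∈ W; moreover, for each such k and each j ∈ {1,…,n} there exists l ∈ {1,…,n} with T_k(I_j ∩ {p_k > 0}) ⊆ I_l. -/

import Mathlib

open Real MeasureTheory Set Filter Topology
open scoped ENNReal NNReal

noncomputable section

namespace RandomBilliard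

/-- The four maps `T_1, …, T_4` of the Feres random map
(index `i : Fin 4` stands for `T_{i+1}`). -/
def T (α : ℝ) : Fin 4 → ℝ → ℝ
  | 0 => fun θ => θ + 2 * α
  | 1 => fun θ => -θ + 2 * π - 4 * α
  | 2 => fun θ => θ - 2 * α
  | 3 => fun θ => -θ + 4 * α

/-- `u_a(θ) = (1/2)(1 + tan a / tan θ)`. -/
def u (a θ : ℝ) : ℝ := 1 / 2 * (1 + Real.tan a / Real.tan θ)

/-- The probabilities `p_1, …, p_4` of the Feres random map
(index `i : Fin 4` stands for `p_{i+1}`). -/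
def p (α : ℝ) : Fin 4 → ℝ → ℝ
  | 0 => fun θ =>
      if θ < α then 1
      else if θ < π - 3 * α then u α θ
      else if θ < π - 2 * α then 2 * Real.cos (2 * α) * u (2 * α) θ
      else 0
  | 1 => fun θ =>
      if θ < π - 3 * α then 0
      else if θ < π - 2 * α then u α θ - 2 * Real.cos (2 * α) * u (2 * α) θ
      else if θ < π - α then u α θ
      else 0
  | 2 => fun θ =>
      if θ < 2 * α then 0
      else if θ < 3 * α then 2 * Real.cos (2 * α) * u (2 * α) (-θ)
      else if θ < π - α then u α (-θ)
      else 1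
  | 3 => fun θ =>
      if θ < α then 0
      else if θ < 2 * α then u α (-θ)
      else if θ < 3 * α then u α (-θ) - 2 * Real.cos (2 * α) * u (2 * α) (-θ)
      else 0

/-- `iterT α x k θ = T_x^{(k)}(θ) = T_{x_k} ∘ ⋯ ∘ T_{x_1}(θ)`
(the term `x j : Fin 4` stands for the symbol `x_{j+1}`). -/
def iterT (α : ℝ) (x : ℕ → Fin 4) : ℕ → ℝ → ℝ
  | 0 => fun θ => θ
  | k + 1 => fun θ => T α (x k) (iterT α x k θ)

/-- `Σ_θ`: the admissible symbol sequences for `θ`, i.e. those whose every finite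
prefix has positive probability. -/
def SigmaTheta (α θ : ℝ) : Set (ℕ → Fin 4) :=
  {x | ∀ k : ℕ, 0 < ∏ j ∈ Finset.range k, p α (x j) (iterT α x j θ)}

/-- `C(θ)`: all possible future images of `θ` under the Feres random map. -/
def Cset (α θ : ℝ) : Set ℝ :=
  {θ' | θ' ∈ Set.Ioo 0 π ∧
    ∃ (x : ℕ → Fin 4) (k : ℕ), x ∈ SigmaTheta α θ ∧ iterT α x k θ = θ'}

/-- The probability measure `μ(A) = (1/2) ∫_A sin θ dθ` on `[0, π]`. -/
def mu0 : Measure ℝ :=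
  (volume.restrict (Set.Icc 0 π)).withDensity fun θ => ENNReal.ofReal (1 / 2 * Real.sin θ)

/-- One step of the evolution of a measure under the Feres random map:
`(stepMeasure α ν)(A) = ∫ K(θ, A) dν(θ)`, where `K(θ, A) = Σ_i p_i(θ) 1_A(T_i θ)`. -/
def stepMeasure (α : ℝ) (ν : Measure ℝ) : Measure ℝ :=
  ∑ i : Fin 4, Measure.map (T α i) (ν.withDensity fun θ => ENNReal.ofReal (p α i θ))

/-- One step of the evolution of a measure under the random billiard map in the circle
`F̄(s, θ) = (s + 2 T_i(θ) mod 2π, T_i(θ))` with probability `p_i(θ)`. -/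
def circleStep (α : ℝ) (ν : Measure (ℝ × ℝ)) : Measure (ℝ × ℝ) :=
  ∑ i : Fin 4,
    Measure.map
      (fun q : ℝ × ℝ => (toIcoMod Real.two_pi_pos 0 (q.1 + 2 * T α i q.2), T α i q.2))
      (ν.withDensity fun q => ENNReal.ofReal (p α i q.2))

/-- The transition kernel `K(θ', ·) = Σ_i p_i(θ') δ_{T_i(θ')}` of the Feres random map. -/
def feresKernel (α : ℝ) (t : ℝ) : Measure ℝ :=
  ∑ i : Fin 4, ENNReal.ofReal (p α i t) • Measure.dirac (T α i t)

/-- `k`-step iterates of a transition kernel. -/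
def kerIterate (κ : ℝ → Measure ℝ) : ℕ → ℝ → Measure ℝ
  | 0 => fun t => Measure.dirac t
  | k + 1 => fun t => (κ t).bind (kerIterate κ k)

/-- The probability that a Markov chain with kernel `κ` started at `t` satisfies
`θ_0 ∈ B 0, …, θ_n ∈ B n`. -/
def cylProb (κ : ℝ → Measure ℝ) : ℕ → (ℕ → Set ℝ) → ℝ → ℝ≥0∞
  | 0 => fun B t => Set.indicator (B 0) (fun _ => (1 : ℝ≥0∞)) t
  | n + 1 => fun B t =>
      Set.indicator (B 0)
        (fun _ => ∫⁻ t', cylProb κ n (fun k => B (k + 1)) t' ∂(κ t)) t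

/-- `ν` is the Markov path measure on `ℕ → ℝ` (given by the Ionescu–Tulcea construction)
with initial distribution `ρ` and transition kernel `κ`, characterized by its values
on cylinder sets. -/
def IsMarkovPathMeasure (κ : ℝ → Measure ℝ) (ρ : Measure ℝ) (ν : Measure (ℕ → ℝ)) : Prop :=
  ∀ (n : ℕ) (B : ℕ → Set ℝ), (∀ k, MeasurableSet (B k)) →
    ν {ω | ∀ k ≤ n, ω k ∈ B k} = ∫⁻ t, cylProb κ n B t ∂ρ

/-- The shift map on sequences. -/
def shift : (ℕ → ℝ) → ℕ → ℝ := fun ω n => ω (n + 1)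

/-- Aperiodicity of the Markov chain with kernel `κ` on the state space `S`:
for every state, every common divisor of the return times having positive
probability equals `1` (i.e. every state has period 1). -/
def AperiodicChain (κ : ℝ → Measure ℝ) (S : Set ℝ) : Prop :=
  ∀ t ∈ S, ∀ d : ℕ, (∀ k : ℕ, 1 ≤ k → 0 < kerIterate κ k t {t} → d ∣ k) → d = 1

end RandomBilliard

open RandomBilliard

/-- for `α = (m/n)π` with `gcd(m, n) = 1`, the union
`W = ∪_{j=1}^n I_j` of the intervals `I_j = ((2j-1)π/(2n) - π/(4n), (2j-1)π/(2n) + π/(4n))`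
is invariant under the Feres random map, and each `I_j` is mapped into some `I_l`. -/
theorem union_intervals_invariant (α : ℝ) (hα : α ∈ Set.Ioo 0 (π / 6))
    (m n : ℕ) (hm : 0 < m) (hn : 0 < n) (hcop : Nat.Coprime m n)
    (hrat : α = (m : ℝ) / (n : ℝ) * π)
    (I : ℕ → Set ℝ)
    (hI : ∀ j : ℕ, I j =
      Set.Ioo ((2 * (j : ℝ) - 1) * π / (2 * (n : ℝ)) - π / (4 * (n : ℝ)))
              ((2 * (j : ℝ) - 1) * π / (2 * (n : ℝ)) + π / (4 * (n : ℝ))))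
    (W : Set ℝ) (hW : W = ⋃ j ∈ Finset.Icc 1 n, I j) :
    (∀ θ ∈ W, ∀ k : Fin 4, 0 < p α k θ → T α k θ ∈ W) ∧
    (∀ k : Fin 4, ∀ j ∈ Finset.Icc 1 n, ∃ l ∈ Finset.Icc 1 n,
      T α k '' (I j ∩ {θ | 0 < p α k θ}) ⊆ I l) := by
  obtain ⟨hα0, hα6⟩ := hα
  have hπ : (0:ℝ) < π := Real.pi_pos
  have hn' : (0:ℝ) < (n:ℝ) := by exact_mod_cast hn
  have hα3 : 3 * α < π := by linarith
  have h6m : 6 * m < n := by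
    have h := hα6
    rw [hrat] at h
    have hmn : (m:ℝ) / (n:ℝ) < 1 / 6 := by nlinarith
    rw [div_lt_div_iff₀ hn' (by norm_num : (0:ℝ) < 6)] at hmn
    have : ((6 * m : ℕ) : ℝ) < ((n : ℕ) : ℝ) := by push_cast; linarith
    exact_mod_cast this
  have hne : (n:ℝ) ≠ 0 := ne_of_gt hn'
  obtain ⟨s, hsdef⟩ : ∃ s : ℝ, s = π / (4 * (n:ℝ)) := ⟨_, rfl⟩
  have hs : 0 < s := by rw [hsdef]; positivity
  have hπs : π = 4 * (n:ℝ) * s := by rw [hsdef]; field_simp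
  have hαs : α = 4 * (m:ℝ) * s := by rw [hrat, hsdef]; field_simp
  have hI' : ∀ j : ℕ, I j = Set.Ioo ((4 * (j:ℝ) - 3) * s) ((4 * (j:ℝ) - 1) * s) := by
    intro j
    rw [hI j, hsdef]
    have e1 : (2 * (j:ℝ) - 1) * π / (2 * (n:ℝ)) - π / (4 * (n:ℝ))
        = (4 * (j:ℝ) - 3) * (π / (4 * (n:ℝ))) := by field_simp; ring
    have e2 : (2 * (j:ℝ) - 1) * π / (2 * (n:ℝ)) + π / (4 * (n:ℝ))
        = (4 * (j:ℝ) - 1) * (π / (4 * (n:ℝ))) := by field_simp; ring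
    rw [e1, e2]
  have core : ∀ (k : Fin 4) (j : ℕ), j ∈ Finset.Icc 1 n → ∀ θ0 ∈ I j, 0 < p α k θ0 →
      ∃ l ∈ Finset.Icc 1 n, ∀ θ ∈ I j, T α k θ ∈ I l := by
    intro k j hj θ0 hθ0 hp0
    rw [Finset.mem_Icc] at hj
    obtain ⟨hj1, hjn⟩ := hj
    rw [hI' j] at hθ0
    obtain ⟨hl0, hr0⟩ := hθ0
    fin_cases k
    · -- T₁ : θ ↦ θ + 2α ; p₁ > 0 forces θ < π - 2α
      have hc : θ0 < π - 2 * α := by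
        by_contra h
        push_neg at h
        simp only [p] at hp0
        rw [if_neg (by linarith), if_neg (by linarith), if_neg (by linarith)] at hp0
        exact lt_irrefl 0 hp0
      have h1 : (4 * (j:ℝ) - 3) * s < (4 * (n:ℝ) - 8 * (m:ℝ)) * s := by
        linarith [hπs, hαs]
      have h1' : 4 * (j:ℤ) - 3 < 4 * (n:ℤ) - 8 * (m:ℤ) := by
        exact_mod_cast (mul_lt_mul_iff_of_pos_right hs).mp h1
      refine ⟨j + 2 * m, Finset.mem_Icc.mpr ⟨by omega, by omega⟩, ?_⟩
      intro θ hθ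
      rw [hI' j] at hθ
      rw [hI' (j + 2 * m)]
      obtain ⟨ha, hb⟩ := hθ
      simp only [T, Set.mem_Ioo]
      rw [hαs]
      push_cast
      constructor <;> linarith
    · -- T₂ : θ ↦ -θ + 2π - 4α ; p₂ > 0 forces π - 3α ≤ θ < π - α
      have hc1 : π - 3 * α ≤ θ0 := by
        by_contra h
        push_neg at h
        simp only [p] at hp0
        rw [if_pos h] at hp0
        exact lt_irrefl 0 hp0
      have hc2 : θ0 < π - α := by
        by_contra h
        push_neg at h
        simp only [p] at hp0
        rw [if_neg (by linarith), if_neg (by linarith), if_neg (by linarith)] at hp0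
        exact lt_irrefl 0 hp0
      have h1 : (4 * (n:ℝ) - 12 * (m:ℝ)) * s < (4 * (j:ℝ) - 1) * s := by
        linarith [hπs, hαs]
      have h2 : (4 * (j:ℝ) - 3) * s < (4 * (n:ℝ) - 4 * (m:ℝ)) * s := by
        linarith [hπs, hαs]
      have h1' : 4 * (n:ℤ) - 12 * (m:ℤ) < 4 * (j:ℤ) - 1 := by
        exact_mod_cast (mul_lt_mul_iff_of_pos_right hs).mp h1
      have h2' : 4 * (j:ℤ) - 3 < 4 * (n:ℤ) - 4 * (m:ℤ) := by
        exact_mod_cast (mul_lt_mul_iff_of_pos_right hs).mp h2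
      refine ⟨2 * n + 1 - 4 * m - j, Finset.mem_Icc.mpr ⟨by omega, by omega⟩, ?_⟩
      have hrel : (2 * n + 1 - 4 * m - j) + 4 * m + j = 2 * n + 1 := by omega
      have hlcast : ((2 * n + 1 - 4 * m - j : ℕ) : ℝ) = 2 * (n:ℝ) + 1 - 4 * (m:ℝ) - (j:ℝ) := by
        have := congrArg (Nat.cast : ℕ → ℝ) hrel
        push_cast at this
        linarith
      intro θ hθ
      rw [hI' j] at hθ
      rw [hI' (2 * n + 1 - 4 * m - j)]
      obtain ⟨ha, hb⟩ := hθ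
      simp only [T, Set.mem_Ioo]
      rw [hlcast, hπs, hαs]
      constructor <;> linarith
    · -- T₃ : θ ↦ θ - 2α ; p₃ > 0 forces 2α ≤ θ
      have hc : 2 * α ≤ θ0 := by
        by_contra h
        push_neg at h
        simp only [p] at hp0
        rw [if_pos h] at hp0
        exact lt_irrefl 0 hp0
      have h1 : (8 * (m:ℝ)) * s < (4 * (j:ℝ) - 1) * s := by
        linarith [hπs, hαs]
      have h1' : 8 * (m:ℤ) < 4 * (j:ℤ) - 1 := by
        exact_mod_cast (mul_lt_mul_iff_of_pos_right hs).mp h1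
      refine ⟨j - 2 * m, Finset.mem_Icc.mpr ⟨by omega, by omega⟩, ?_⟩
      have hrel : (j - 2 * m) + 2 * m = j := by omega
      have hlcast : ((j - 2 * m : ℕ) : ℝ) = (j:ℝ) - 2 * (m:ℝ) := by
        have := congrArg (Nat.cast : ℕ → ℝ) hrel
        push_cast at this
        linarith
      intro θ hθ
      rw [hI' j] at hθ
      rw [hI' (j - 2 * m)]
      obtain ⟨ha, hb⟩ := hθ
      simp only [T, Set.mem_Ioo]
      rw [hlcast, hαs]
      constructor <;> linarith
    · -- T₄ : θ ↦ -θ + 4α ; p₄ > 0 forces α ≤ θ < 3α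
      have hc1 : α ≤ θ0 := by
        by_contra h
        push_neg at h
        simp only [p] at hp0
        rw [if_pos h] at hp0
        exact lt_irrefl 0 hp0
      have hc2 : θ0 < 3 * α := by
        by_contra h
        push_neg at h
        simp only [p] at hp0
        rw [if_neg (by linarith), if_neg (by linarith), if_neg (by linarith)] at hp0
        exact lt_irrefl 0 hp0
      have h1 : (4 * (m:ℝ)) * s < (4 * (j:ℝ) - 1) * s := by
        linarith [hπs, hαs]
      have h2 : (4 * (j:ℝ) - 3) * s < (12 * (m:ℝ)) * s := by
        linarith [hπs, hαs]
      have h1' : 4 * (m:ℤ) < 4 * (j:ℤ) - 1 := by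
        exact_mod_cast (mul_lt_mul_iff_of_pos_right hs).mp h1
      have h2' : 4 * (j:ℤ) - 3 < 12 * (m:ℤ) := by
        exact_mod_cast (mul_lt_mul_iff_of_pos_right hs).mp h2
      refine ⟨4 * m + 1 - j, Finset.mem_Icc.mpr ⟨by omega, by omega⟩, ?_⟩
      have hrel : (4 * m + 1 - j) + j = 4 * m + 1 := by omega
      have hlcast : ((4 * m + 1 - j : ℕ) : ℝ) = 4 * (m:ℝ) + 1 - (j:ℝ) := by
        have := congrArg (Nat.cast : ℕ → ℝ) hrel
        push_cast at this
        linarith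
      intro θ hθ
      rw [hI' j] at hθ
      rw [hI' (4 * m + 1 - j)]
      obtain ⟨ha, hb⟩ := hθ
      simp only [T, Set.mem_Ioo]
      rw [hlcast, hαs]
      constructor <;> linarith
  constructor
  · intro θ hθ k hpk
    rw [hW] at hθ ⊢
    simp only [Set.mem_iUnion] at hθ
    obtain ⟨j, hj, hθj⟩ := hθ
    obtain ⟨l, hl, hmap⟩ := core k j hj θ hθj hpk
    exact Set.mem_biUnion hl (hmap θ hθj)
  · intro k j hj
    rcases Set.eq_empty_or_nonempty (I j ∩ {θ | 0 < p α k θ}) with he | ⟨θ0, hθ0, hp0⟩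
    · exact ⟨1, Finset.mem_Icc.mpr ⟨le_refl 1, hn⟩, by rw [he]; simp⟩
    · obtain ⟨l, hl, hmap⟩ := core k j hj θ0 hθ0 hp0
      refine ⟨l, hl, ?_⟩
      rintro y ⟨θ, ⟨hθI, _⟩, rfl⟩
      exact hmap θ hθI
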